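/- arXiv:1307.7263 — 4 statements merged into one kernel-verified Lean document; each statement's English description precedes it below -/
import Mathlib

section
/- Let n ≥ 1, let η₁ > 0 and η₂ > 0 satisfy η₁ ≤ η₂ ≤ c·η₁ for some constant c > 1, and let x ∈ ℝⁿ. If S ⊆ ℝⁿ is a set of points such that η₁ ≤ ‖s − x‖ ≤ η₂ for every s ∈ S and ‖s − s'‖ ≥ η₁ for all distinct s, s' ∈ S, then S is finite and its cardinality is at most (2c + 1)ⁿ. (This is the paper's 'kissing number' bound on the number of neighbors of a state of the sparse transition system: the open balls of radius η₁/2 centered at points of S are pairwise disjoint and contained in the ball of radius (c + 1/2)·η₁ centered at x, so a volume comparison bounds |S| by (2c+1)ⁿ, a constant depending only on n and c.) -/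
open Metric Set MeasureTheory
open scoped ENNReal

lemma sparse_aux (n : ℕ) (η₁ c : ℝ) (hη₁ : 0 < η₁) (hc : 1 < c)
    (x : EuclideanSpace ℝ (Fin n)) (t : Finset (EuclideanSpace ℝ (Fin n)))
    (hb : ∀ s ∈ t, ‖s - x‖ ≤ c * η₁)
    (hsep : ∀ s ∈ t, ∀ s' ∈ t, s ≠ s' → η₁ ≤ ‖s - s'‖) :
    (t.card : ℝ) ≤ (2 * c + 1) ^ n := by
  borelize (EuclideanSpace ℝ (Fin n))
  let μ : Measure (EuclideanSpace ℝ (Fin n)) := Measure.addHaar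
  set δ : ℝ := η₁ / 2 with hδ
  set ρ : ℝ := (c + 1 / 2) * η₁ with hρ
  have δpos : 0 < δ := by positivity
  have ρpos : 0 < ρ := by positivity
  have hdim : Module.finrank ℝ (EuclideanSpace ℝ (Fin n)) = n := finrank_euclideanSpace_fin
  set A := ⋃ s ∈ t, ball s δ with hA
  have D : Set.Pairwise (t : Set (EuclideanSpace ℝ (Fin n))) (Function.onFun Disjoint fun s => ball s δ) := by
    rintro s hs s' hs' hss'
    apply ball_disjoint_ball
    rw [dist_eq_norm]
    have := hsep s hs s' hs' hss'
    linarith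
  have A_subset : A ⊆ ball x ρ := by
    refine iUnion₂_subset fun s hs => ?_
    apply ball_subset_ball'
    have : dist s x ≤ c * η₁ := by rw [dist_eq_norm]; exact hb s hs
    linarith
  have I :
      (t.card : ℝ≥0∞) * ENNReal.ofReal (δ ^ n) * μ (ball 0 1) ≤
        ENNReal.ofReal (ρ ^ n) * μ (ball 0 1) :=
    calc
      (t.card : ℝ≥0∞) * ENNReal.ofReal (δ ^ n) * μ (ball 0 1) = μ A := by
        rw [hA, measure_biUnion_finset D fun s _ => measurableSet_ball]
        simp only [μ.addHaar_ball_of_pos _ δpos, hdim]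
        simp only [Finset.sum_const, nsmul_eq_mul, mul_assoc]
      _ ≤ μ (ball x ρ) := measure_mono A_subset
      _ = ENNReal.ofReal (ρ ^ n) * μ (ball 0 1) := by
        simp only [μ.addHaar_ball_of_pos _ ρpos, hdim]
  have J : (t.card : ℝ≥0∞) * ENNReal.ofReal (δ ^ n) ≤ ENNReal.ofReal (ρ ^ n) :=
    (ENNReal.mul_le_mul_iff_left (measure_ball_pos _ _ zero_lt_one).ne' measure_ball_lt_top.ne).1 I
  have K : (t.card : ℝ) * δ ^ n ≤ ρ ^ n := by
    have := ENNReal.toReal_le_of_le_ofReal (pow_nonneg ρpos.le _) J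
    rw [ENNReal.toReal_mul, ENNReal.toReal_natCast,
      ENNReal.toReal_ofReal (pow_nonneg δpos.le _)] at this
    exact this
  have hratio : ρ = (2 * c + 1) * δ := by rw [hρ, hδ]; ring
  have : (t.card : ℝ) * δ ^ n ≤ (2 * c + 1) ^ n * δ ^ n := by
    rw [hratio, mul_pow] at K; exact K
  exact le_of_mul_le_mul_right this (pow_pos δpos n)

/-- Kissing-number style bound: if every point of `S` lies in the annulus
`η₁ ≤ ‖s - x‖ ≤ η₂` around `x`, with `η₁ ≤ η₂ ≤ c·η₁`, and the points of `S`
are pairwise `η₁`-separated, then `S` is finite with at most `(2c+1)^n` points. -/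
theorem sparse_rrg_neighbor_bound
    (n : ℕ) (hn : 1 ≤ n) (η₁ η₂ c : ℝ)
    (hη₁ : 0 < η₁) (hη₂ : 0 < η₂) (hc : 1 < c)
    (h12 : η₁ ≤ η₂) (h2c : η₂ ≤ c * η₁)
    (x : EuclideanSpace ℝ (Fin n)) (S : Set (EuclideanSpace ℝ (Fin n)))
    (hann : ∀ s ∈ S, η₁ ≤ ‖s - x‖ ∧ ‖s - x‖ ≤ η₂)
    (hsep : ∀ s ∈ S, ∀ s' ∈ S, s ≠ s' → η₁ ≤ ‖s - s'‖) :
    S.Finite ∧ (S.ncard : ℝ) ≤ (2 * c + 1) ^ n := by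
  have key : ∀ t : Finset (EuclideanSpace ℝ (Fin n)), ↑t ⊆ S →
      (t.card : ℝ) ≤ (2 * c + 1) ^ n := by
    intro t ht
    apply sparse_aux n η₁ c hη₁ hc x t
    · exact fun s hs => le_trans (hann s (ht hs)).2 h2c
    · exact fun s hs s' hs' h => hsep s (ht hs) s' (ht hs') h
  have hfin : S.Finite := by
    by_contra h
    obtain ⟨u, hu, hcard⟩ := (Set.Infinite.exists_subset_card_eq h)
      (⌈(2 * c + 1) ^ n⌉₊ + 1)
    have h1 := key u hu
    have h2 : ((⌈(2 * c + 1) ^ n⌉₊ + 1 : ℕ) : ℝ) ≤ (2 * c + 1) ^ n := by rw [← hcard]; exact h1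
    have h3 : (2 * c + 1) ^ n ≤ (⌈(2 * c + 1) ^ n⌉₊ : ℝ) := Nat.le_ceil _
    push_cast at h2
    linarith
  refine ⟨hfin, ?_⟩
  have := key hfin.toFinset (by simp)
  rw [Set.ncard_eq_toFinset_card S hfin]; exact this
end

section
/- Let n ≥ 1 and let G be a finite directed graph whose vertex set V is a set of points of ℝⁿ that is η₁-separated (all pairwise distances between distinct vertices are at least η₁ > 0), and suppose every edge (u, v) of G satisfies ‖u − v‖ ≤ η₂, where η₁ ≤ η₂ ≤ c·η₁ for some constant c > 1. Then the number of edges of G is at most (2c + 1)ⁿ · |V|. In particular the number of edges is O(|V|), i.e., G is a sparse graph. (This is the claim, used in the proof of the paper's complexity theorem, that the metric sparseness of the transition system built by the Sparse RRG algorithm implies topological sparseness of its underlying graph.) -/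
open MeasureTheory Metric Finset
open scoped ENNReal

lemma pack_bound (n : ℕ) (η₁ η₂ c : ℝ)
    (hη₁ : 0 < η₁) (hc : 1 < c) (h12 : η₁ ≤ η₂) (h2c : η₂ ≤ c * η₁)
    (x : EuclideanSpace ℝ (Fin n)) (s : Finset (EuclideanSpace ℝ (Fin n)))
    (hd : ∀ y ∈ s, ‖x - y‖ ≤ η₂)
    (hsep : ∀ y ∈ s, ∀ z ∈ s, y ≠ z → η₁ ≤ ‖y - z‖) :
    (s.card : ℝ) ≤ (2 * c + 1) ^ n := by
  obtain ⟨r, hr⟩ : ∃ r : ℝ, r = η₁ / 2 := ⟨_, rfl⟩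
  obtain ⟨R, hR⟩ : ∃ R : ℝ, R = η₂ + η₁ / 2 := ⟨_, rfl⟩
  have hrpos : 0 < r := by rw [hr]; positivity
  have hRpos : 0 < R := by rw [hR]; linarith
  have hfr : Module.finrank ℝ (EuclideanSpace ℝ (Fin n)) = n :=
    finrank_euclideanSpace_fin
  -- balls are pairwise disjoint
  have hdisj : (s : Set (EuclideanSpace ℝ (Fin n))).PairwiseDisjoint
      (fun y => Metric.ball y r) := by
    intro y hy z hz hyz
    apply Metric.ball_disjoint_ball
    have := hsep y hy z hz hyz
    rw [dist_eq_norm]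
    linarith
  have hsub : ∀ y ∈ s, Metric.ball y r ⊆ Metric.ball x R := by
    intro y hy p hp
    rw [Metric.mem_ball] at hp ⊢
    have h1 : dist p x ≤ dist p y + dist y x := dist_triangle p y x
    have h2 : dist y x ≤ η₂ := by
      rw [dist_comm, dist_eq_norm]; exact hd y hy
    linarith
  have hmeas : volume (⋃ y ∈ s, Metric.ball y r) = ∑ y ∈ s, volume (Metric.ball y r) :=
    measure_biUnion_finset hdisj (fun y _ => measurableSet_ball)
  have hball : ∀ y : EuclideanSpace ℝ (Fin n),
      volume (Metric.ball y r) = ENNReal.ofReal (r ^ n) * volume (Metric.ball (0 : EuclideanSpace ℝ (Fin n)) 1) := by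
    intro y
    rw [Measure.addHaar_ball_of_pos volume y hrpos, hfr]
  have hballR : volume (Metric.ball x R)
      = ENNReal.ofReal (R ^ n) * volume (Metric.ball (0 : EuclideanSpace ℝ (Fin n)) 1) := by
    rw [Measure.addHaar_ball_of_pos volume x hRpos, hfr]
  have hle : volume (⋃ y ∈ s, Metric.ball y r) ≤ volume (Metric.ball x R) :=
    measure_mono (Set.iUnion₂_subset hsub)
  rw [hmeas, hballR] at hle
  simp only [hball, Finset.sum_const, nsmul_eq_mul] at hle
  have hμ0 : volume (Metric.ball (0 : EuclideanSpace ℝ (Fin n)) 1) ≠ 0 :=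
    (measure_ball_pos volume 0 one_pos).ne'
  have hμt : volume (Metric.ball (0 : EuclideanSpace ℝ (Fin n)) 1) ≠ ⊤ :=
    measure_ball_lt_top.ne
  have key : (s.card : ℝ≥0∞) * ENNReal.ofReal (r ^ n) ≤ ENNReal.ofReal (R ^ n) := by
    rw [← ENNReal.mul_le_mul_iff_left hμ0 hμt]
    calc (s.card : ℝ≥0∞) * ENNReal.ofReal (r ^ n) * volume (Metric.ball (0 : EuclideanSpace ℝ (Fin n)) 1)
        = (s.card : ℝ≥0∞) * (ENNReal.ofReal (r ^ n) * volume (Metric.ball (0 : EuclideanSpace ℝ (Fin n)) 1)) := by ring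
      _ ≤ ENNReal.ofReal (R ^ n) * volume (Metric.ball (0 : EuclideanSpace ℝ (Fin n)) 1) := hle
  have key' : (s.card : ℝ) * r ^ n ≤ R ^ n := by
    have h1 : ENNReal.ofReal ((s.card : ℝ) * r ^ n) ≤ ENNReal.ofReal (R ^ n) := by
      rw [ENNReal.ofReal_mul (by positivity : (0:ℝ) ≤ (s.card : ℝ))]
      simpa using key
    exact (ENNReal.ofReal_le_ofReal_iff (by positivity)).mp h1
  -- now R ≤ (2c+1) * r
  have hRle : R ≤ (2 * c + 1) * r := by
    rw [hR, hr]; nlinarith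
  have hRn : R ^ n ≤ ((2 * c + 1) * r) ^ n :=
    pow_le_pow_left₀ hRpos.le hRle n
  have hfin : (s.card : ℝ) * r ^ n ≤ (2 * c + 1) ^ n * r ^ n := by
    calc (s.card : ℝ) * r ^ n ≤ R ^ n := key'
      _ ≤ ((2 * c + 1) * r) ^ n := hRn
      _ = (2 * c + 1) ^ n * r ^ n := mul_pow _ _ _
  have hrn : 0 < r ^ n := by positivity
  exact le_of_mul_le_mul_right hfin hrn

/-- Metric sparseness implies topological sparseness: a directed graph on an
`η₁`-separated vertex set `V ⊆ ℝⁿ`, whose edges are ordered pairs of distinct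
vertices of Euclidean length at most `η₂` with `η₁ ≤ η₂ ≤ c·η₁`, has at most
`(2c+1)^n · |V|` edges. -/
theorem sparse_graph_edge_bound
    (n : ℕ) (hn : 1 ≤ n) (η₁ η₂ c : ℝ)
    (hη₁ : 0 < η₁) (hc : 1 < c)
    (h12 : η₁ ≤ η₂) (h2c : η₂ ≤ c * η₁)
    (V : Finset (EuclideanSpace ℝ (Fin n)))
    (E : Finset (EuclideanSpace ℝ (Fin n) × EuclideanSpace ℝ (Fin n)))
    (hE : ∀ e ∈ E, e.1 ∈ V ∧ e.2 ∈ V ∧ e.1 ≠ e.2)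
    (hsep : ∀ u ∈ V, ∀ v ∈ V, u ≠ v → η₁ ≤ ‖u - v‖)
    (hlen : ∀ e ∈ E, ‖e.1 - e.2‖ ≤ η₂) :
    (E.card : ℝ) ≤ (2 * c + 1) ^ n * V.card := by
  classical
  have hcard : E.card = ∑ u ∈ V, (E.filter (fun e => e.1 = u)).card :=
    Finset.card_eq_sum_card_fiberwise (fun e he => (hE e he).1)
  have hfiber : ∀ u ∈ V, ((E.filter (fun e => e.1 = u)).card : ℝ) ≤ (2 * c + 1) ^ n := by
    intro u hu
    set F := E.filter (fun e => e.1 = u) with hF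
    have himg : F.card = (F.image Prod.snd).card := by
      rw [Finset.card_image_of_injOn]
      intro e he f hf hef
      have he' := Finset.mem_filter.mp he
      have hf' := Finset.mem_filter.mp hf
      exact Prod.ext (he'.2.trans hf'.2.symm) hef
    rw [himg]
    apply pack_bound n η₁ η₂ c hη₁ hc h12 h2c u
    · intro y hy
      obtain ⟨e, he, rfl⟩ := Finset.mem_image.mp hy
      have he' := Finset.mem_filter.mp he
      have := hlen e he'.1
      rwa [he'.2] at this
    · intro y hy z hz hyz
      obtain ⟨e, he, rfl⟩ := Finset.mem_image.mp hy
      obtain ⟨f, hf, rfl⟩ := Finset.mem_image.mp hz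
      exact hsep _ (hE e (Finset.mem_filter.mp he).1).2.1 _
        (hE f (Finset.mem_filter.mp hf).1).2.1 hyz
  calc (E.card : ℝ) = ∑ u ∈ V, ((E.filter (fun e => e.1 = u)).card : ℝ) := by
        rw [hcard]; push_cast; ring
    _ ≤ ∑ u ∈ V, (2 * c + 1) ^ n := Finset.sum_le_sum hfiber
    _ = (2 * c + 1) ^ n * V.card := by rw [Finset.sum_const, nsmul_eq_mul, mul_comm]
end

section
/- Let E be a measurable space, let (Xᵢ)_{i∈ℕ} be an independent and identically distributed sequence of E-valued random variables with common distribution P, and let U₀, U₁, …, U_m ⊆ E be measurable sets with P(U_j) > 0 for every j. For N ∈ ℕ let A_N be the event that there exist indices i₀ < i₁ < ⋯ < i_m < N with X_{i_j} ∈ U_j for all j. Then ℙ(A_N) → 1 as N → ∞. (This is the quantitative form of probabilistic completeness: as the number of samples goes to infinity, the probability that the transition system contains states in all the required neighborhoods, visited in the required order, goes to 1.) -/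
open MeasureTheory ProbabilityTheory Filter

/-- Quantitative probabilistic completeness: for an i.i.d. sequence with common
law `P` and measurable sets `U 0, …, U m` of positive `P`-measure, the
probability that among the first `N` samples there are indices
`i 0 < i 1 < ⋯ < i m < N` with `X (i j) ∈ U j` for all `j` tends to `1` as
`N → ∞`. -/
theorem iid_hits_in_order_prob_tendsto_one
    {Ω E : Type*} [MeasurableSpace Ω] [MeasurableSpace E]
    (μ : Measure Ω) [IsProbabilityMeasure μ]
    (X : ℕ → Ω → E) (hXmeas : ∀ i, Measurable (X i))
    (hindep : iIndepFun X μ)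
    (P : Measure E) (hdist : ∀ i, Measure.map (X i) μ = P)
    (m : ℕ) (U : Fin (m + 1) → Set E)
    (hU : ∀ j, MeasurableSet (U j)) (hP : ∀ j, 0 < P (U j)) :
    Tendsto
      (fun N : ℕ =>
        μ {ω | ∃ i : Fin (m + 1) → ℕ,
            StrictMono i ∧ (∀ j, i j < N) ∧ ∀ j, X (i j) ω ∈ U j})
      atTop (nhds 1) := by
  classical
  -- block events
  set C : ℕ → Set Ω := fun k => ⋂ j : Fin (m + 1), X (k * (m + 1) + (j : ℕ)) ⁻¹' U j with hC
  have hCmeas : ∀ k, MeasurableSet (C k) := fun k =>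
    MeasurableSet.iInter fun j => (hXmeas _) (hU j)
  set p : ENNReal := ∏ j : Fin (m + 1), P (U j) with hp
  have hppos : 0 < p := CanonicallyOrderedAdd.prod_pos.2 fun j _ => hP j
  have hXU : ∀ i j, μ (X i ⁻¹' U j) = P (U j) := fun i j => by
    rw [← hdist i, Measure.map_apply (hXmeas i) (hU j)]
  -- each block event has probability p
  have hmuC : ∀ k, μ (C k) = p := by
    intro k
    set sets : ℕ → Set E := fun i => U ⟨i % (m + 1), Nat.mod_lt _ (Nat.succ_pos m)⟩ with hsets
    have hsets_eq : ∀ j : Fin (m + 1), sets (k * (m + 1) + (j : ℕ)) = U j := by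
      intro j
      have hjm := j.isLt
      have hmod : (k * (m + 1) + (j : ℕ)) % (m + 1) = (j : ℕ) := by
        rw [Nat.add_comm, Nat.add_mul_mod_self_right]
        exact Nat.mod_eq_of_lt hjm
      simp only [hsets]
      exact congrArg U (Fin.eq_of_val_eq hmod)
    have hinj : ∀ a b : Fin (m + 1),
        k * (m + 1) + (a : ℕ) = k * (m + 1) + (b : ℕ) → a = b := fun a b hab =>
      Fin.ext (Nat.add_left_cancel hab)
    set S : Finset ℕ := Finset.image (fun j : Fin (m + 1) => k * (m + 1) + (j : ℕ))
      Finset.univ with hS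
    have hCS : C k = ⋂ i ∈ S, X i ⁻¹' sets i := by
      ext ω
      simp only [hC, Set.mem_iInter, hS, Finset.mem_image, Finset.mem_univ, true_and,
        Set.mem_preimage]
      constructor
      · rintro h i ⟨j, rfl⟩
        rw [hsets_eq j]; exact h j
      · intro h j
        have := h _ ⟨j, rfl⟩
        rwa [hsets_eq j] at this
    rw [hCS, hindep.measure_inter_preimage_eq_mul S (fun i _ => hU _),
      Finset.prod_image (fun a _ b _ h => hinj a b h), hp]
    refine Finset.prod_congr rfl fun j _ => ?_
    show μ (X (k * (m + 1) + (j : ℕ)) ⁻¹' sets (k * (m + 1) + (j : ℕ))) = P (U j)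
    rw [hsets_eq j, hXU]
  -- probability that no block event among the first K blocks occurs
  have hD : ∀ K : ℕ, μ (⋂ k ∈ Finset.range K, (C k)ᶜ) = (1 - p) ^ K := by
    intro K
    induction K with
    | zero => simp
    | succ K ih =>
      have hdisj : Disjoint (Set.Iio (K * (m + 1)) : Set ℕ) (Set.Ici (K * (m + 1))) :=
        Set.Iio_disjoint_Ici le_rfl
      have hInd := indep_iSup_of_disjoint
        (m := fun i : ℕ => MeasurableSpace.comap (X i) inferInstance)
        (fun i => (hXmeas i).comap_le) hindep.iIndep hdisj
      have hmem : ∀ (i : ℕ) (s : Set ℕ), i ∈ s → ∀ j : Fin (m + 1),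
          MeasurableSet[⨆ i ∈ s, MeasurableSpace.comap (X i) inferInstance]
            (X i ⁻¹' U j) := by
        intro i s hi j
        have h1 : MeasurableSet[MeasurableSpace.comap (X i) inferInstance] (X i ⁻¹' U j) :=
          ⟨U j, hU j, rfl⟩
        exact le_biSup (fun i => MeasurableSpace.comap (X i) inferInstance) hi _ h1
      have h1 : MeasurableSet[⨆ i ∈ Set.Iio (K * (m + 1)),
          MeasurableSpace.comap (X i) inferInstance] (⋂ k ∈ Finset.range K, (C k)ᶜ) := by
        refine MeasurableSet.biInter (Finset.range K).countable_toSet fun k hk => ?_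
        refine MeasurableSet.compl ?_
        refine MeasurableSet.iInter fun j => hmem _ _ ?_ j
        have hkK : k < K := Finset.mem_range.mp hk
        have hjm := j.isLt
        have : k * (m + 1) + (j : ℕ) < K * (m + 1) := by
          calc k * (m + 1) + (j : ℕ) < k * (m + 1) + (m + 1) := by omega
            _ = (k + 1) * (m + 1) := by ring
            _ ≤ K * (m + 1) := Nat.mul_le_mul_right _ hkK
        exact this
      have h2 : MeasurableSet[⨆ i ∈ Set.Ici (K * (m + 1)),
          MeasurableSpace.comap (X i) inferInstance] ((C K)ᶜ) := by
        refine MeasurableSet.compl ?_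
        refine MeasurableSet.iInter fun j => hmem _ _ ?_ j
        exact Nat.le_add_right _ _
      have hkey := (Indep_iff _ _ μ).1 hInd _ _ h1 h2
      have hins : (⋂ k ∈ Finset.range (K + 1), (C k)ᶜ)
          = (⋂ k ∈ Finset.range K, (C k)ᶜ) ∩ (C K)ᶜ := by
        rw [Finset.range_add_one]
        simp only [Finset.set_biInter_insert]
        rw [Set.inter_comm]
      rw [hins, hkey, ih, prob_compl_eq_one_sub (hCmeas K), hmuC K, pow_succ]
  -- the union of the first N/(m+1) block events is contained in the target event
  have hsub : ∀ N : ℕ, (⋃ k ∈ Finset.range (N / (m + 1)), C k) ⊆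
      {ω | ∃ i : Fin (m + 1) → ℕ,
          StrictMono i ∧ (∀ j, i j < N) ∧ ∀ j, X (i j) ω ∈ U j} := by
    intro N ω hω
    simp only [Set.mem_iUnion, exists_prop] at hω
    obtain ⟨k, hk, hωk⟩ := hω
    refine ⟨fun j => k * (m + 1) + (j : ℕ), ?_, ?_, ?_⟩
    · intro a b hab
      exact Nat.add_lt_add_left hab _
    · intro j
      have hkK : k < N / (m + 1) := Finset.mem_range.mp hk
      have h1 : (k + 1) * (m + 1) ≤ (N / (m + 1)) * (m + 1) :=
        Nat.mul_le_mul_right _ hkK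
      have h2 : (N / (m + 1)) * (m + 1) ≤ N := Nat.div_mul_le_self _ _
      have hjm := j.isLt
      calc k * (m + 1) + (j : ℕ) < (k + 1) * (m + 1) := by
            have : k * (m + 1) + (j : ℕ) < k * (m + 1) + (m + 1) := by omega
            calc k * (m + 1) + (j : ℕ) < k * (m + 1) + (m + 1) := this
              _ = (k + 1) * (m + 1) := by ring
        _ ≤ N := le_trans h1 h2
    · intro j
      exact Set.mem_iInter.mp hωk j
  -- lower bound
  have hlow : ∀ N : ℕ, 1 - (1 - p) ^ (N / (m + 1)) ≤
      μ {ω | ∃ i : Fin (m + 1) → ℕ,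
          StrictMono i ∧ (∀ j, i j < N) ∧ ∀ j, X (i j) ω ∈ U j} := by
    intro N
    refine le_trans ?_ (measure_mono (hsub N))
    have hmeasU : MeasurableSet (⋃ k ∈ Finset.range (N / (m + 1)), C k) :=
      MeasurableSet.biUnion (Finset.range _).countable_toSet fun k _ => hCmeas k
    have hcompl : (⋃ k ∈ Finset.range (N / (m + 1)), C k)ᶜ
        = ⋂ k ∈ Finset.range (N / (m + 1)), (C k)ᶜ := by
      simp [Set.compl_iUnion]
    have hadd := measure_add_measure_compl (μ := μ) hmeasU
    rw [hcompl, hD, measure_univ] at hadd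
    exact tsub_le_iff_right.mpr hadd.symm.le
  have hub : ∀ N : ℕ, μ {ω | ∃ i : Fin (m + 1) → ℕ,
      StrictMono i ∧ (∀ j, i j < N) ∧ ∀ j, X (i j) ω ∈ U j} ≤ 1 := fun N => prob_le_one
  refine tendsto_of_tendsto_of_tendsto_of_le_of_le ?_ tendsto_const_nhds hlow hub
  -- the lower bound tends to 1
  have hdiv : Tendsto (fun N : ℕ => N / (m + 1)) atTop atTop := by
    refine tendsto_atTop_atTop.2 fun b => ⟨b * (m + 1), fun n hn => ?_⟩
    exact (Nat.le_div_iff_mul_le (Nat.succ_pos m)).2 hn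
  have hlt1 : (1 : ENNReal) - p < 1 :=
    ENNReal.sub_lt_self ENNReal.one_ne_top one_ne_zero hppos.ne'
  have hpow : Tendsto (fun K : ℕ => (1 - p) ^ K) atTop (nhds 0) :=
    ENNReal.tendsto_pow_atTop_nhds_zero_of_lt_one hlt1
  have hcomp := ((ENNReal.continuous_sub_left ENNReal.one_ne_top).tendsto 0).comp
    (hpow.comp hdiv)
  simpa [Function.comp_def] using hcomp
end

section
/- Let S be a finite set, let R ⊆ S × S be a binary relation (the transition relation of a finite automaton or product automaton), let s₀ ∈ S, and let F ⊆ S. Then the following are equivalent: (1) there exists an infinite sequence x : ℕ → S with x(0) = s₀, (x(k), x(k+1)) ∈ R for all k ≥ 0, and the set {k ∈ ℕ : x(k) ∈ F} infinite; (2) there exists f ∈ F such that f is reachable from s₀ under the reflexive-transitive closure of R and (f, f) belongs to the transitive closure of R (i.e., there is a cycle through f of length at least 1). (This is the correctness criterion of the paper's incremental search: a satisfying — accepting — trajectory of the product automaton exists if and only if some final state is reachable from an initial state and lies on a non-degenerate cycle; moreover the satisfying run can be taken as a finite prefix followed by infinitely many repetitions of a finite suffix.) -/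
private lemma run_reflTransGen {S : Type*} {R : S → S → Prop} {x : ℕ → S}
    (h : ∀ k, R (x k) (x (k + 1))) {m n : ℕ} (hmn : m ≤ n) :
    Relation.ReflTransGen R (x m) (x n) := by
  induction n, hmn using Nat.le_induction with
  | base => exact Relation.ReflTransGen.refl
  | succ n hn ih => exact ih.tail (h n)

private lemma run_transGen {S : Type*} {R : S → S → Prop} {x : ℕ → S}
    (h : ∀ k, R (x k) (x (k + 1))) {m n : ℕ} (hmn : m < n) :
    Relation.TransGen R (x m) (x n) := by
  have h1 : Relation.ReflTransGen R (x (m + 1)) (x n) := run_reflTransGen h hmn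
  exact Relation.TransGen.head' (h m) h1

private lemma exists_path {S : Type*} {R : S → S → Prop} {a b : S}
    (h : Relation.ReflTransGen R a b) :
    ∃ n : ℕ, ∃ p : ℕ → S, p 0 = a ∧ p n = b ∧ ∀ k < n, R (p k) (p (k + 1)) := by
  induction h with
  | refl => exact ⟨0, fun _ => a, rfl, rfl, by omega⟩
  | @tail b c hab hbc ih =>
    obtain ⟨n, p, h0, hn, hs⟩ := ih
    refine ⟨n + 1, fun k => if k ≤ n then p k else c, by simp [h0], by simp, ?_⟩
    intro k hk
    by_cases hkn : k < n
    · simp only [if_pos (le_of_lt hkn), if_pos (Nat.succ_le_of_lt hkn)]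
      exact hs k hkn
    · have hk' : k = n := by omega
      subst hk'
      simp only [le_refl, if_pos, if_neg (by omega : ¬ k + 1 ≤ k), hn]
      exact hbc

/-- Correctness criterion of the incremental search: in a finite transition
structure, there is an infinite run from `s₀` visiting the accepting set `F`
infinitely often iff some `f ∈ F` is reachable from `s₀` and lies on a cycle
of length at least 1. -/
theorem accepting_run_iff_reachable_cycle
    {S : Type*} [Finite S] (R : S → S → Prop) (s₀ : S) (F : Set S) :
    (∃ x : ℕ → S, x 0 = s₀ ∧ (∀ k : ℕ, R (x k) (x (k + 1))) ∧
        {k : ℕ | x k ∈ F}.Infinite) ↔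
      (∃ f ∈ F, Relation.ReflTransGen R s₀ f ∧ Relation.TransGen R f f) := by
  constructor
  · rintro ⟨x, hx0, hR, hinf⟩
    obtain ⟨k₁, hk₁, k₂, hk₂, hne, heq⟩ :=
      hinf.exists_ne_map_eq_of_mapsTo (f := x) (t := (Set.univ : Set S))
        (fun k _ => Set.mem_univ _) Set.finite_univ
    rcases lt_or_gt_of_ne hne with hlt | hlt
    · refine ⟨x k₁, hk₁, hx0 ▸ run_reflTransGen hR (Nat.zero_le k₁), ?_⟩
      have h := run_transGen hR hlt
      rwa [← heq] at h
    · refine ⟨x k₂, hk₂, hx0 ▸ run_reflTransGen hR (Nat.zero_le k₂), ?_⟩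
      have h := run_transGen hR hlt
      rwa [heq] at h
  · rintro ⟨f, hfF, hreach, hcyc⟩
    obtain ⟨n, p, hp0, hpn, hps⟩ := exists_path hreach
    obtain ⟨b, hfb, hbf⟩ := Relation.TransGen.tail'_iff.mp hcyc
    obtain ⟨m', c, hc0, hcm', hcs⟩ := exists_path hfb
    set m : ℕ := m' + 1 with hm_def
    set q : ℕ → S := fun k => if k ≤ m' then c k else f with hq_def
    have hq0 : q 0 = f := by simp [hq_def, hc0]
    have hqm : q m = f := by simp [hq_def, hm_def]
    have hqs : ∀ k < m, R (q k) (q (k + 1)) := by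
      intro k hk
      by_cases hkn : k < m'
      · simp only [hq_def, if_pos (le_of_lt hkn), if_pos (Nat.succ_le_of_lt hkn)]
        exact hcs k hkn
      · have hk' : k = m' := by omega
        subst hk'
        simp only [hq_def, le_refl, if_pos, if_neg (by omega : ¬ k + 1 ≤ k), hcm']
        exact hbf
    have hmpos : 0 < m := Nat.succ_pos _
    have hmod : ∀ j, R (q (j % m)) (q ((j + 1) % m)) := by
      intro j
      have h1 : j % m < m := Nat.mod_lt _ hmpos
      have h2 : (j + 1) % m = (j % m + 1) % m := (Nat.mod_add_mod j m 1).symm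
      by_cases h3 : j % m + 1 < m
      · rw [h2, Nat.mod_eq_of_lt h3]; exact hqs _ h1
      · have h4 : j % m + 1 = m := by omega
        rw [h2, h4, Nat.mod_self]
        have h5 := hqs (j % m) h1
        rwa [h4, hqm, ← hq0] at h5
    refine ⟨fun k => if k < n then p k else q ((k - n) % m), ?_, ?_, ?_⟩
    · by_cases hn : 0 < n
      · simpa [hn] using hp0
      · have hn0 : n = 0 := by omega
        subst hn0
        show (if (0:ℕ) < 0 then p 0 else q ((0 - 0) % m)) = s₀
        rw [if_neg (lt_irrefl 0)]
        norm_num [hq0]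
        rw [← hpn, hp0]
    · intro k
      by_cases hk1 : k + 1 < n
      · simp only [if_pos (by omega : k < n), if_pos hk1]
        exact hps k (by omega)
      · by_cases hk2 : k < n
        · have hk3 : k + 1 = n := by omega
          simp only [if_pos hk2, if_neg (by omega : ¬ k + 1 < n), hk3,
            Nat.sub_self, Nat.zero_mod, hq0]
          have := hps k hk2
          rw [hk3, hpn] at this
          rw [if_neg (lt_irrefl n)]
          exact this
        · obtain ⟨j, rfl⟩ : ∃ j, k = n + j := ⟨k - n, by omega⟩
          have e1 : n + j - n = j := by omega
          have e2 : n + j + 1 - n = j + 1 := by omega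
          simp only [if_neg (by omega : ¬ n + j < n),
            if_neg (by omega : ¬ n + j + 1 < n), e1, e2]
          exact hmod j
    · apply Set.infinite_of_injective_forall_mem
        (f := fun i : ℕ => n + i * m)
      · intro a b hab
        simp only at hab
        exact Nat.eq_of_mul_eq_mul_right hmpos (Nat.add_left_cancel hab)
      · intro i
        simp only [Set.mem_setOf_eq, if_neg (by omega : ¬ n + i * m < n)]
        have e1 : n + i * m - n = i * m := by omega
        rw [e1, Nat.mul_mod_left, hq0]
        exact hfF
end
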